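/- Let t > 0 and let k ≥ 0 and z ≥ 0 be integers. Then ψ_k(z) = w_t(z) · ∑_{l=k}^{2k} S_{k,l} C_l(z,t), where w_t(z) = e^{−t} t^z / z!, S_{k,l} = (−1)^{l−k} binom(k, l−k), and C_l is the Charlier polynomial. -/

import Mathlib

open Complex Metric

/-- The Charlier polynomial
`C_n(x,t) = ∑_{j=0}^{n} binom(n,j) · x(x-1)⋯(x-j+1) · (-1/t)^j`. -/
noncomputable def charlier (n : ℕ) (x : ℝ) (t : ℝ) : ℝ :=
  ∑ j ∈ Finset.range (n + 1),
    (n.choose j : ℝ) * (∏ m ∈ Finset.range j, (x - m)) * (-1 / t) ^ j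

/-- `ψ_k(z) = ((-1)^k/(2πi)) ∮_{|w|=r} dw w^(-z-1) e^((w-1)t) ((w-1)w)^k`, with the
contour a positively oriented circle of radius `r ∈ (0,1)` centered at the origin. -/
noncomputable def psi (t r : ℝ) (k z : ℤ) : ℂ :=
  ((-1 : ℂ) ^ k / (2 * ↑Real.pi * Complex.I)) *
    ∮ w in C(0, r), w ^ (-z - 1) * Complex.exp ((w - 1) * ↑t) * ((w - 1) * w) ^ k

-- helper: finite sum of circle integrals
lemma circleIntegral_finset_sum {ι : Type*} (s : Finset ι) (f : ι → ℂ → ℂ) (c : ℂ) (R : ℝ)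
    (h : ∀ i ∈ s, CircleIntegrable (f i) c R) :
    (∮ w in C(c, R), ∑ i ∈ s, f i w) = ∑ i ∈ s, ∮ w in C(c, R), f i w := by
  simp only [circleIntegral, Finset.smul_sum]
  exact intervalIntegral.integral_finset_sum (fun i hi => (h i hi).out)

lemma circleIntegrable_zpow_mul_exp {r : ℝ} (hr : 0 < r) (m : ℤ) (c : ℂ) :
    CircleIntegrable (fun w : ℂ => w ^ m * Complex.exp (w * c)) 0 r := by
  apply ContinuousOn.circleIntegrable hr.le
  intro w hw
  have hw0 : w ≠ 0 := by
    simp only [mem_sphere_iff_norm, sub_zero] at hw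
    intro h; rw [h] at hw; simp at hw; linarith
  exact ((continuousAt_zpow₀ w m (Or.inl hw0)).continuousWithinAt.mul
    ((Complex.continuous_exp.comp (continuous_id.mul continuous_const)).continuousWithinAt))


lemma CircleIntegrable.const_mul'' {f : ℂ → ℂ} {c : ℂ} {R : ℝ} (h : CircleIntegrable f c R)
    (a : ℂ) : CircleIntegrable (fun w => a * f w) c R :=
  by unfold CircleIntegrable at h ⊢; exact h.const_mul a

lemma circleIntegral_add' {f g : ℂ → ℂ} {c : ℂ} {R : ℝ} (hf : CircleIntegrable f c R)
    (hg : CircleIntegrable g c R) :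
    (∮ w in C(c, R), (f w + g w)) = (∮ w in C(c, R), f w) + ∮ w in C(c, R), g w := by
  simp only [circleIntegral, smul_add]
  exact intervalIntegral.integral_add hf.out hg.out

lemma circleIntegral_zpow_neg_mul_exp {r : ℝ} (hr : 0 < r) (N : ℕ) (c : ℂ) :
    (∮ w in C(0, r), w ^ (-(N : ℤ) - 1) * Complex.exp (w * c)) =
      (2 * Real.pi * Complex.I) * c ^ N / N.factorial := by
  induction N with
  | zero =>
      have hd : DifferentiableOn ℂ (fun w : ℂ => Complex.exp (w * c)) (closedBall 0 r) :=
        (Complex.differentiable_exp.comp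
          (differentiable_id.mul (differentiable_const c))).differentiableOn
      have h0 := hd.circleIntegral_sub_inv_smul (mem_ball_self hr)
      simp only [sub_zero, smul_eq_mul, zero_mul, Complex.exp_zero, mul_one] at h0
      rw [show (-(0:ℕ) - 1 : ℤ) = -1 by norm_num]
      simp only [zpow_neg_one]
      simpa using h0
  | succ N ih =>
      have hNe : ((-(N : ℤ) - 1 : ℤ) : ℂ) ≠ 0 := by
        exact_mod_cast (by omega : (-(N : ℤ) - 1 : ℤ) ≠ 0)
      have hzero : (∮ z in C(0, r), ((((-(N : ℤ) - 1 : ℤ) : ℂ)) * (z ^ (-(N : ℤ) - 2) * Complex.exp (z * c)) +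
          c * (z ^ (-(N : ℤ) - 1) * Complex.exp (z * c)))) = 0 := by
        apply circleIntegral.integral_eq_zero_of_hasDerivWithinAt hr.le
          (f := fun w : ℂ => w ^ (-(N : ℤ) - 1) * Complex.exp (w * c))
        intro z hz
        have hz0 : z ≠ 0 := by
          simp only [mem_sphere_iff_norm, sub_zero] at hz
          intro h; rw [h] at hz; simp at hz; linarith
        have h1 : HasDerivAt (fun w : ℂ => w ^ (-(N : ℤ) - 1))
            ((((-(N : ℤ) - 1 : ℤ) : ℂ)) * z ^ (-(N : ℤ) - 2)) z := by
          have := hasDerivAt_zpow (-(N : ℤ) - 1) z (Or.inl hz0)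
          simpa [show -(N : ℤ) - 1 - 1 = -(N : ℤ) - 2 by omega] using this
        have h2 : HasDerivAt (fun w : ℂ => Complex.exp (w * c)) (c * Complex.exp (z * c)) z := by
          have := (Complex.hasDerivAt_exp (z * c)).comp z ((hasDerivAt_id z).mul_const c)
          simpa [mul_comm, Function.comp_def] using this
        apply HasDerivAt.hasDerivWithinAt
        convert h1.mul h2 using 1
        case e'_4 => rfl
        case e'_8 => rfl
        case e'_9 => ring
      rw [circleIntegral_add' ((circleIntegrable_zpow_mul_exp hr (-(N : ℤ) - 2) c).const_mul'' _)
          ((circleIntegrable_zpow_mul_exp hr (-(N : ℤ) - 1) c).const_mul'' _),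
        circleIntegral.integral_const_mul, circleIntegral.integral_const_mul, ih] at hzero
      have hcast : (-((N : ℕ) + 1 : ℕ) - 1 : ℤ) = -(N : ℤ) - 2 := by push_cast; omega
      rw [hcast]
      have hfac : ((N + 1).factorial : ℂ) = (N + 1 : ℂ) * N.factorial := by
        rw [Nat.factorial_succ]; push_cast; ring
      have hNfac : (N.factorial : ℂ) ≠ 0 := Nat.cast_ne_zero.2 N.factorial_ne_zero
      have hN1 : (N + 1 : ℂ) ≠ 0 := Nat.cast_add_one_ne_zero N
      have he : (((-(N : ℤ) - 1 : ℤ) : ℂ)) = -((N : ℂ) + 1) := by push_cast; ring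
      rw [he] at hzero
      rw [hfac]
      set X := (∮ w in C(0, r), w ^ (-(N : ℤ) - 2) * Complex.exp (w * c)) with hX
      rw [eq_div_iff (mul_ne_zero hN1 hNfac)]
      field_simp at hzero
      linear_combination -hzero

lemma circleIntegral_pow_mul_exp {r : ℝ} (hr : 0 < r) (n : ℕ) (c : ℂ) :
    (∮ w in C(0, r), w ^ (n : ℤ) * Complex.exp (w * c)) = 0 := by
  have hd : Differentiable ℂ (fun w : ℂ => w ^ (n : ℤ) * Complex.exp (w * c)) := by
    simp only [zpow_natCast]
    exact (differentiable_pow n).mul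
      (Complex.differentiable_exp.comp (differentiable_id.mul (differentiable_const c)))
  exact Complex.circleIntegral_eq_zero_of_differentiable_on_off_countable hr.le
    Set.countable_empty hd.continuous.continuousOn
    (fun z _ => hd.differentiableAt)

open Polynomial in
lemma key_binomial (k i : ℕ) :
    (∑ m ∈ Finset.range (k + 1), (-1 : ℤ) ^ m * (k.choose m) * ((k + m).choose i)) =
      (-1) ^ k * (if k ≤ i then (k.choose (i - k) : ℤ) else 0) := by
  have hpoly : (∑ m ∈ Finset.range (k + 1),
      C ((-1 : ℤ) ^ m * (k.choose m : ℤ)) * (1 + X) ^ (k + m)) = (1 + X) ^ k * (-X) ^ k := by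
    have h1 : ((1 : ℤ[X]) + -(1 + X)) ^ k =
        ∑ m ∈ Finset.range (k + 1), (-(1 + X)) ^ m * 1 ^ (k - m) * (k.choose m : ℤ[X]) :=
      add_comm (1 : ℤ[X]) (-(1+X)) ▸ add_pow (-(1+X)) 1 k
    have h2 : ((1 : ℤ[X]) + -(1 + X)) = -X := by ring
    rw [h2] at h1
    calc (∑ m ∈ Finset.range (k + 1), C ((-1 : ℤ) ^ m * (k.choose m : ℤ)) * (1 + X) ^ (k + m))
        = (1 + X) ^ k * ∑ m ∈ Finset.range (k + 1), (-(1+X)) ^ m * 1 ^ (k-m) * (k.choose m : ℤ[X]) := by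
          rw [Finset.mul_sum]
          refine Finset.sum_congr rfl fun m _ => ?_
          rw [pow_add]
          simp only [map_mul, map_pow, map_neg, map_one, C_eq_natCast, one_pow, neg_pow ((1+X : ℤ[X]))]
          push_cast
          ring
      _ = (1 + X) ^ k * (-X) ^ k := by rw [← h1]
  have := congrArg (fun p : ℤ[X] => p.coeff i) hpoly
  simp only [finset_sum_coeff, coeff_C_mul, coeff_one_add_X_pow] at this
  rw [this, neg_pow (X : ℤ[X]) k, ← mul_assoc, mul_comm ((1+X)^k), mul_assoc,
    show ((-1:ℤ[X])^k * ((1+X)^k * X^k)) = C ((-1:ℤ)^k) * ((1+X)^k * X^k) by simp,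
    coeff_C_mul, coeff_mul_X_pow']
  split_ifs with h <;> simp [coeff_one_add_X_pow]

lemma ff_eq_zero {z n : ℕ} (h : z < n) :
    (∏ m ∈ Finset.range n, ((z : ℝ) - m)) = 0 :=
  Finset.prod_eq_zero (Finset.mem_range.2 h) (by simp)

lemma ff_eq {z n : ℕ} (h : n ≤ z) :
    (∏ m ∈ Finset.range n, ((z : ℝ) - m)) = (z.factorial : ℝ) / (z - n).factorial := by
  induction n with
  | zero => simp [div_self (Nat.cast_ne_zero.2 (Nat.factorial_ne_zero z) : (z.factorial:ℝ) ≠ 0)]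
  | succ n ih =>
      have hn : n ≤ z := by omega
      rw [Finset.prod_range_succ, ih hn]
      have h1 : (z - n : ℕ) = (z - (n+1)) + 1 := by omega
      have hfacN : (z - n).factorial = (z - n) * (z - (n+1)).factorial := by
        rw [h1, Nat.factorial_succ, ← h1]
      have h2 : ((z - n : ℕ) : ℝ) = (z : ℝ) - n := Nat.cast_sub hn
      have h3 : ((z - (n + 1)).factorial : ℝ) ≠ 0 := Nat.cast_ne_zero.2 (Nat.factorial_ne_zero _)
      have h5 : (n : ℝ) < (z : ℝ) := by exact_mod_cast (by omega : n < z)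
      have h4 : (z : ℝ) - n ≠ 0 := sub_ne_zero.2 (ne_of_gt h5)
      rw [hfacN]
      push_cast [h2]
      field_simp

lemma real_identity (t : ℝ) (ht : 0 < t) (k z : ℕ) :
    (∑ j ∈ Finset.range (k + 1), (-1 : ℝ) ^ j * (k.choose j : ℝ) *
        (if k + j ≤ z then t ^ (z - k - j) / ((z - k - j).factorial : ℝ) else 0)) =
      t ^ z / (z.factorial : ℝ) *
        ∑ l ∈ Finset.Icc k (2 * k), (-1 : ℝ) ^ (l - k) * (k.choose (l - k) : ℝ) *
          charlier l (z : ℝ) t := by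
  have ht0 : t ≠ 0 := ne_of_gt ht
  -- reindex the RHS sum over l = k + i
  rw [← Finset.Ico_add_one_right_eq_Icc, Finset.sum_Ico_eq_sum_range,
    show 2 * k + 1 - k = k + 1 by omega]
  simp only [Nat.add_sub_cancel_left]
  -- expand charlier and extend the inner range to 2k+1
  have hch : ∀ i ∈ Finset.range (k + 1),
      (-1 : ℝ) ^ i * (k.choose i : ℝ) * charlier (k + i) (z : ℝ) t =
      ∑ j ∈ Finset.range (2 * k + 1), (-1 : ℝ) ^ i * (k.choose i : ℝ) *
        (((k + i).choose j : ℝ) * (∏ m ∈ Finset.range j, ((z : ℝ) - m)) * (-1 / t) ^ j) := by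
    intro i hi
    have hik : i ≤ k := by simpa [Nat.lt_succ_iff] using hi
    rw [charlier, Finset.mul_sum]
    apply Finset.sum_subset
    · exact Finset.range_subset_range.2 (by omega)
    · intro j hj hnj
      have hlt : k + i < j := by
        simp only [Finset.mem_range, Nat.lt_succ_iff] at hj hnj
        omega
      simp [Nat.choose_eq_zero_of_lt hlt]
  rw [Finset.sum_congr rfl hch, Finset.sum_comm]
  -- evaluate the inner sum using the key binomial identity
  have hkey : ∀ j ∈ Finset.range (2 * k + 1),
      (∑ i ∈ Finset.range (k + 1), (-1 : ℝ) ^ i * (k.choose i : ℝ) *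
        (((k + i).choose j : ℝ) * (∏ m ∈ Finset.range j, ((z : ℝ) - m)) * (-1 / t) ^ j)) =
      ((∏ m ∈ Finset.range j, ((z : ℝ) - m)) * (-1 / t) ^ j) *
        ((-1 : ℝ) ^ k * (if k ≤ j then (k.choose (j - k) : ℝ) else 0)) := by
    intro j _
    have := key_binomial k j
    have hcast : (∑ i ∈ Finset.range (k + 1), (-1 : ℝ) ^ i * (k.choose i : ℝ) *
        ((k + i).choose j : ℝ)) = (-1 : ℝ) ^ k * (if k ≤ j then (k.choose (j - k) : ℝ) else 0) := by
      have h2 := congrArg (fun x : ℤ => (x : ℝ)) this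
      push_cast at h2
      exact h2
    calc (∑ i ∈ Finset.range (k + 1), (-1 : ℝ) ^ i * (k.choose i : ℝ) *
        (((k + i).choose j : ℝ) * (∏ m ∈ Finset.range j, ((z : ℝ) - m)) * (-1 / t) ^ j))
        = (∑ i ∈ Finset.range (k + 1), (-1 : ℝ) ^ i * (k.choose i : ℝ) *
            ((k + i).choose j : ℝ)) * ((∏ m ∈ Finset.range j, ((z : ℝ) - m)) * (-1 / t) ^ j) := by
          rw [Finset.sum_mul]; refine Finset.sum_congr rfl fun i _ => by ring
      _ = _ := by rw [hcast]; ring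
  rw [Finset.sum_congr rfl hkey]
  -- drop the zero terms with j < k and reindex j = k + j'
  have hsub : Finset.Ico k (2 * k + 1) ⊆ Finset.range (2 * k + 1) := by
    intro x hx; simp only [Finset.mem_Ico] at hx; exact Finset.mem_range.2 hx.2
  rw [← Finset.sum_subset hsub (by
    intro x hx hnx
    simp only [Finset.mem_range] at hx
    simp only [Finset.mem_Ico, not_and, not_lt] at hnx
    have : x < k := by omega
    simp [Nat.not_le.2 this])]
  rw [Finset.sum_Ico_eq_sum_range, show 2 * k + 1 - k = k + 1 by omega]
  simp only [Nat.add_sub_cancel_left, le_add_iff_nonneg_right, zero_le, if_true,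
    Nat.le_add_right]
  rw [Finset.mul_sum]
  refine Finset.sum_congr rfl fun j hj => ?_
  have hjk : j ≤ k := by simpa [Nat.lt_succ_iff] using hj
  by_cases hzj : k + j ≤ z
  · rw [if_pos hzj, ff_eq hzj, show z - k - j = z - (k + j) by omega]
    have hzfac : (z.factorial : ℝ) ≠ 0 := Nat.cast_ne_zero.2 (Nat.factorial_ne_zero z)
    have hzfac2 : ((z - (k + j)).factorial : ℝ) ≠ 0 := Nat.cast_ne_zero.2 (Nat.factorial_ne_zero _)
    have hpow : t ^ (z - (k + j)) = t ^ z / t ^ (k + j) := pow_sub₀ t ht0 hzj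
    have hsign : (-1 : ℝ) ^ j = (-1 : ℝ) ^ k * (-1) ^ (k + j) := by
      rw [← pow_add, show k + (k + j) = j + 2 * k by omega, pow_add, pow_mul]
      norm_num
    rw [hpow, hsign, div_pow, neg_pow (1:ℝ) (k+j), one_pow]
    field_simp
  · rw [if_neg hzj, ff_eq_zero (by omega)]
    ring

/-- For `t > 0` and integers `k ≥ 0`, `z ≥ 0`,
`ψ_k(z) = w_t(z) · ∑_{l=k}^{2k} S_{k,l} C_l(z,t)`, where `w_t(z) = e^{-t} t^z / z!` and
`S_{k,l} = (-1)^{l-k} binom(k, l-k)`, with `C_l` the Charlier polynomial. -/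
theorem statement15 (t : ℝ) (ht : 0 < t) (k z : ℕ) (r : ℝ)
    (hr : r ∈ Set.Ioo (0 : ℝ) 1) :
    psi t r (k : ℤ) (z : ℤ) =
      ((Real.exp (-t) * t ^ z / (Nat.factorial z) *
        ∑ l ∈ Finset.Icc k (2 * k),
          (-1 : ℝ) ^ (l - k) * (k.choose (l - k) : ℝ) * charlier l (z : ℝ) t : ℝ) : ℂ) := by
  obtain ⟨hr0, _⟩ := hr
  have hDne : (2 * (Real.pi : ℂ) * Complex.I) ≠ 0 := by
    simp [Real.pi_ne_zero, Complex.I_ne_zero]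
  -- the coefficients
  set c : ℕ → ℂ := fun j => Complex.exp (-(t : ℂ)) * ((-1 : ℂ) ^ (k - j) * (k.choose j : ℂ))
    with hc
  -- rewrite the integrand as a finite sum on the sphere
  have hcong : Set.EqOn
      (fun w : ℂ => w ^ (-(z : ℤ) - 1) * Complex.exp ((w - 1) * (t : ℂ)) * ((w - 1) * w) ^ (k : ℤ))
      (fun w : ℂ => ∑ j ∈ Finset.range (k + 1),
        c j * (w ^ ((j : ℤ) + k - z - 1) * Complex.exp (w * (t : ℂ))))
      (sphere (0 : ℂ) r) := by
    intro w hw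
    have hw0 : w ≠ 0 := by
      simp only [mem_sphere_iff_norm, sub_zero] at hw
      intro h; rw [h] at hw; simp at hw; linarith
    have hexp : Complex.exp ((w - 1) * (t : ℂ)) =
        Complex.exp (w * (t : ℂ)) * Complex.exp (-(t : ℂ)) := by
      rw [← Complex.exp_add]; ring_nf
    have hbin : (w - 1) ^ k = ∑ j ∈ Finset.range (k + 1),
        w ^ j * (-1 : ℂ) ^ (k - j) * (k.choose j : ℂ) := by
      have := add_pow w (-1 : ℂ) k
      simpa [sub_eq_add_neg] using this
    simp only
    rw [show ((w - 1) * w) ^ (k : ℤ) = ((w - 1) * w) ^ k from zpow_natCast _ k,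
      mul_pow, hexp, hbin, Finset.sum_mul, Finset.mul_sum]
    refine Finset.sum_congr rfl fun j hj => ?_
    have hzpow : w ^ ((j : ℤ) + k - z - 1) = w ^ (-(z:ℤ) - 1) * w ^ j * w ^ k := by
      rw [show ((j : ℤ) + k - z - 1) = (-(z:ℤ) - 1) + (j : ℤ) + (k : ℤ) by ring,
        zpow_add₀ hw0, zpow_add₀ hw0, zpow_natCast, zpow_natCast]
    rw [hzpow, hc]
    ring
  have hInt := circleIntegral.integral_congr (c := (0:ℂ)) (R := r) hr0.le hcong
  -- split the integral into a sum
  have hsplit : (∮ w in C(0, r), ∑ j ∈ Finset.range (k + 1),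
      c j * (w ^ ((j : ℤ) + k - z - 1) * Complex.exp (w * (t : ℂ)))) =
      ∑ j ∈ Finset.range (k + 1),
        c j * ∮ w in C(0, r), w ^ ((j : ℤ) + k - z - 1) * Complex.exp (w * (t : ℂ)) := by
    rw [circleIntegral_finset_sum (Finset.range (k + 1))
      (fun j w => c j * (w ^ ((j : ℤ) + k - z - 1) * Complex.exp (w * (t : ℂ)))) 0 r
      (fun j _ =>
        (circleIntegrable_zpow_mul_exp hr0 ((j : ℤ) + k - z - 1) (t : ℂ)).const_mul'' _)]
    exact Finset.sum_congr rfl fun j _ => circleIntegral.integral_const_mul _ _ _ _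
  -- evaluate each integral
  have hval : ∀ j ∈ Finset.range (k + 1),
      (∮ w in C(0, r), w ^ ((j : ℤ) + k - z - 1) * Complex.exp (w * (t : ℂ))) =
      (2 * (Real.pi : ℂ) * Complex.I) *
        (if k + j ≤ z then (t : ℂ) ^ (z - k - j) / ((z - k - j).factorial : ℂ) else 0) := by
    intro j _
    by_cases hzj : k + j ≤ z
    · rw [if_pos hzj,
        show ((j : ℤ) + k - z - 1) = -((z - k - j : ℕ) : ℤ) - 1 by push_cast; omega,
        circleIntegral_zpow_neg_mul_exp hr0 (z - k - j) (t : ℂ)]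
      rw [show z - k - j = z - (k + j) by omega]
      ring
    · rw [if_neg hzj,
        show ((j : ℤ) + k - z - 1) = ((j + k - z - 1 : ℕ) : ℤ) by push_cast; omega,
        circleIntegral_pow_mul_exp hr0 (j + k - z - 1) (t : ℂ), mul_zero]
  have hsum2 : ∑ j ∈ Finset.range (k + 1),
      c j * (∮ w in C(0, r), w ^ ((j : ℤ) + k - z - 1) * Complex.exp (w * (t : ℂ))) =
      ∑ j ∈ Finset.range (k + 1), c j * ((2 * (Real.pi : ℂ) * Complex.I) *
        (if k + j ≤ z then (t : ℂ) ^ (z - k - j) / ((z - k - j).factorial : ℂ) else 0)) :=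
    Finset.sum_congr rfl fun j hj => by rw [hval j hj]
  rw [psi, hInt, hsplit, hsum2]
  -- pull out the 2πi factor and cancel it
  have hpull : ∑ j ∈ Finset.range (k + 1), c j * ((2 * (Real.pi : ℂ) * Complex.I) *
      (if k + j ≤ z then (t : ℂ) ^ (z - k - j) / ((z - k - j).factorial : ℂ) else 0)) =
      (2 * (Real.pi : ℂ) * Complex.I) * ∑ j ∈ Finset.range (k + 1), c j *
        (if k + j ≤ z then (t : ℂ) ^ (z - k - j) / ((z - k - j).factorial : ℂ) else 0) := by
    rw [Finset.mul_sum]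
    exact Finset.sum_congr rfl fun j _ => by ring
  rw [hpull, show ((-1 : ℂ) ^ (k : ℤ)) = (-1 : ℂ) ^ k from zpow_natCast _ k]
  rw [div_mul_eq_mul_div, mul_comm ((2 : ℂ) * Real.pi * Complex.I), mul_div_assoc,
    mul_div_assoc, div_self hDne, mul_one]
  -- now a purely algebraic computation
  rw [show Real.exp (-t) * t ^ z / (z.factorial : ℝ) *
      (∑ l ∈ Finset.Icc k (2 * k), (-1 : ℝ) ^ (l - k) * (k.choose (l - k) : ℝ) *
        charlier l (z : ℝ) t)
      = Real.exp (-t) * (t ^ z / (z.factorial : ℝ) *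
        ∑ l ∈ Finset.Icc k (2 * k), (-1 : ℝ) ^ (l - k) * (k.choose (l - k) : ℝ) *
          charlier l (z : ℝ) t) by ring,
    ← real_identity t ht k z, hc]
  push_cast [Complex.ofReal_exp, Finset.mul_sum]
  refine Finset.sum_congr rfl fun j hj => ?_
  have hjk : j ≤ k := by simpa [Nat.lt_succ_iff] using hj
  have hsign : (-1 : ℂ) ^ k * (-1 : ℂ) ^ (k - j) = (-1 : ℂ) ^ j := by
    rw [← pow_add, show k + (k - j) = j + 2 * (k - j) by omega, pow_add, pow_mul]
    norm_num
  split_ifs with h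
  · push_cast
    rw [← hsign]
    ring
  · push_cast
    ring
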